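/- Let n ≥ 2, U = {1,…,n}, let S = (S_1,…,S_m) be a family of nonempty subsets of U, and let k ≤ m. Define trees P and T as follows. P has a center vertex p with 3n⁴ pendant leaves; additionally p is adjacent to the centers of stars R_1,…,R_n (where R_i has exactly i leaves), X_1,…,X_{m−k} (each with n³ leaves), and Y_1,…,Y_k (each with n² leaves). T has a center vertex t with 3n⁴ pendant leaves; additionally t is adjacent to vertices t_1,…,t_m, where each t_i has n³ pendant leaves, one neighbour for each s ∈ S_i that is the center of a star with s leaves, and one further neighbour that is the center of a star with n² leaves. Then every minor embedding g of P in T satisfies g(t) = p. -/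

import Mathlib

/-- Inclusive Set Cover: ground set `{1,…,n}`, family `S` indexed by `ι`, budget `k`.
The instance is a yes-instance if some subfamily `R` with `|R| ≤ k` admits a surjection `f`
from the disjoint union `⊔_{i∈R} S_i` onto `{1,…,n}` with `f (v,i) ≤ v` everywhere. -/
def InclusiveSetCoverYes {ι : Type*} (n : ℕ) (S : ι → Finset ℕ) (k : ℕ) : Prop :=
  ∃ (R : Finset ι) (f : {p : ℕ × ι // p.2 ∈ R ∧ p.1 ∈ S p.2} → {u : ℕ // u ∈ Finset.Icc 1 n}),
    R.card ≤ k ∧ Function.Surjective f ∧ ∀ p, (f p : ℕ) ≤ p.1.1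

/-- A minor embedding of `P` in `T`: a surjective `f : V(T) → V(P)` with connected preimages
of vertices such that every edge of `P` is realized by an edge of `T`. -/
def IsMinorEmbedding {V W : Type*} (T : SimpleGraph V) (P : SimpleGraph W) (f : V → W) : Prop :=
  Function.Surjective f ∧
  (∀ w : W, ((T.induce (f ⁻¹' {w})).Connected)) ∧
  (∀ ⦃u v : W⦄, P.Adj u v → ∃ u' v', T.Adj u' v' ∧ f u' = u ∧ f v' = v)

/-- Vertices of the pattern tree `P`: a center `p` with `3n⁴` pendant leaves, adjacent to the
centers of stars `R_1,…,R_n` (`R_i` having `i` leaves, the index `i : Fin n` standing for the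
1-based value `i+1`), `X_1,…,X_{m−k}` (each with `n³` leaves), and `Y_1,…,Y_k` (each with `n²`
leaves). -/
inductive PVert (n m k : ℕ) : Type
  | p : PVert n m k
  | pleaf : Fin (3*n^4) → PVert n m k
  | rcenter : Fin n → PVert n m k
  | rleaf : (i : Fin n) → Fin (i.val + 1) → PVert n m k
  | xcenter : Fin (m - k) → PVert n m k
  | xleaf : Fin (m - k) → Fin (n^3) → PVert n m k
  | ycenter : Fin k → PVert n m k
  | yleaf : Fin k → Fin (n^2) → PVert n m k

/-- Base adjacency relation for the tree `P`. -/
def PRel (n m k : ℕ) : PVert n m k → PVert n m k → Prop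
  | .p, .pleaf _ => True
  | .p, .rcenter _ => True
  | .p, .xcenter _ => True
  | .p, .ycenter _ => True
  | .rcenter i, .rleaf i' _ => i = i'
  | .xcenter i, .xleaf i' _ => i = i'
  | .ycenter i, .yleaf i' _ => i = i'
  | _, _ => False

/-- The tree `P`. -/
def Pgraph (n m k : ℕ) : SimpleGraph (PVert n m k) := SimpleGraph.fromRel (PRel n m k)

/-- Vertices of the host tree `T`: a center `t` with `3n⁴` pendant leaves, adjacent to
`t_1,…,t_m`, where each `t_i` has `n³` pendant leaves, for every `s ∈ S_i` a neighbour which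
is the center of a star with `s` leaves, and one further neighbour which is the center of a
star with `n²` leaves. -/
inductive TVert (n m : ℕ) (S : Fin m → Finset ℕ) : Type
  | t : TVert n m S
  | tleaf : Fin (3*n^4) → TVert n m S
  | ti : Fin m → TVert n m S
  | tileaf : Fin m → Fin (n^3) → TVert n m S
  | scenter : (i : Fin m) → {s : ℕ // s ∈ S i} → TVert n m S
  | sleaf : (i : Fin m) → (s : {s : ℕ // s ∈ S i}) → Fin s.val → TVert n m S
  | ycenter : Fin m → TVert n m S
  | yleaf : Fin m → Fin (n^2) → TVert n m S

/-- Base adjacency relation for the tree `T`. -/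
def TRel (n m : ℕ) (S : Fin m → Finset ℕ) : TVert n m S → TVert n m S → Prop
  | .t, .tleaf _ => True
  | .t, .ti _ => True
  | .ti i, .tileaf i' _ => i = i'
  | .ti i, .scenter i' _ => i = i'
  | .ti i, .ycenter i' => i = i'
  | .scenter i s, .sleaf i' s' _ => i = i' ∧ (s : ℕ) = (s' : ℕ)
  | .ycenter i, .yleaf i' _ => i = i'
  | _, _ => False

/-- The tree `T`. -/
def Tgraph (n m : ℕ) (S : Fin m → Finset ℕ) : SimpleGraph (TVert n m S) :=
  SimpleGraph.fromRel (TRel n m S)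

variable {n m : ℕ} {S : Fin m → Finset ℕ}

def tlab : TVert n m S → Option (Fin m ⊕ Fin (3*n^4))
  | .t => none
  | .tleaf j => some (.inr j)
  | .ti i => some (.inl i)
  | .tileaf i _ => some (.inl i)
  | .scenter i _ => some (.inl i)
  | .sleaf i _ _ => some (.inl i)
  | .ycenter i => some (.inl i)
  | .yleaf i _ => some (.inl i)

lemma tlab_adj {u v : TVert n m S} (h : (Tgraph n m S).Adj u v) (hu : u ≠ .t) (hv : v ≠ .t) :
    tlab u = tlab v := by
  rw [Tgraph, SimpleGraph.fromRel_adj] at h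
  obtain ⟨-, h | h⟩ := h <;>
  · cases u <;> cases v <;> simp_all [TRel, tlab]

lemma tlab_eq_none {x : TVert n m S} (h : tlab x = none) : x = .t := by
  cases x <;> simp_all [tlab]

lemma tlab_walk {A : Set (TVert n m S)} (ht : TVert.t ∉ A) :
    ∀ {a b : A}, ((Tgraph n m S).induce A).Walk a b → tlab a.val = tlab b.val := by
  intro a b w
  induction w with
  | nil => rfl
  | @cons x y z h _ ih =>
    refine (tlab_adj (by simpa using h) ?_ ?_).trans ih
    · exact fun he => ht (he ▸ x.2)
    · exact fun he => ht (he ▸ y.2)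

def tenc : TVert n m S → Option (Unit ⊕ Fin (n^3) ⊕ Fin (n+1) ⊕ (Fin (n+1) × Fin (n+1)) ⊕ Unit ⊕ Fin (n^2))
  | .t => none
  | .tleaf _ => none
  | .ti _ => some (.inl ())
  | .tileaf _ a => some (.inr (.inl a))
  | .scenter _ s => some (.inr (.inr (.inl ⟨s.val % (n+1), Nat.mod_lt _ n.succ_pos⟩)))
  | .sleaf _ s a => some (.inr (.inr (.inr (.inl
      (⟨s.val % (n+1), Nat.mod_lt _ n.succ_pos⟩, ⟨a.val % (n+1), Nat.mod_lt _ n.succ_pos⟩)))))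
  | .ycenter _ => some (.inr (.inr (.inr (.inr (.inl ())))))
  | .yleaf _ a => some (.inr (.inr (.inr (.inr (.inr a)))))

set_option maxHeartbeats 2000000 in
lemma tenc_inj (hS : ∀ i, S i ⊆ Finset.Icc 1 n) {i : Fin m} {x y : TVert n m S}
    (hx : x = .t ∨ tlab x = some (.inl i)) (hy : y = .t ∨ tlab y = some (.inl i))
    (h : tenc x = tenc y) : x = y := by
  have hle : ∀ (j : Fin m) (s : {s : ℕ // s ∈ S j}), s.val < n + 1 := by
    intro j s
    have := hS j s.2
    simp only [Finset.mem_Icc] at this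
    omega
  cases x <;> cases y <;> simp_all [tlab, tenc]
  case scenter.scenter i1 s1 i2 s2 =>
    subst hx; subst hy
    have l1 : (s1 : ℕ) < n + 1 := by have := hle _ _ s1.2; omega
    have l2 : (s2 : ℕ) < n + 1 := by have := hle _ _ s2.2; omega
    rw [Nat.mod_eq_of_lt l1, Nat.mod_eq_of_lt l2] at h
    exact heq_of_eq (Subtype.ext h)
  case sleaf.sleaf i1 s1 a1 i2 s2 a2 =>
    subst hx; subst hy
    obtain ⟨hs, ha⟩ := h
    have l1 : (s1 : ℕ) < n + 1 := by have := hle _ _ s1.2; omega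
    have l2 : (s2 : ℕ) < n + 1 := by have := hle _ _ s2.2; omega
    rw [Nat.mod_eq_of_lt l1, Nat.mod_eq_of_lt l2] at hs
    rw [Nat.mod_eq_of_lt (lt_trans a1.2 l1), Nat.mod_eq_of_lt (lt_trans a2.2 l2)] at ha
    obtain ⟨s1v, hs1⟩ := s1
    obtain ⟨s2v, hs2⟩ := s2
    simp only at hs
    subst hs
    exact ⟨heq_of_eq (Subtype.ext rfl), heq_of_eq (Fin.ext ha)⟩

lemma adj_tleaf {jt : Fin (3*n^4)} {y : TVert n m S}
    (h : (Tgraph n m S).Adj (.tleaf jt) y) : y = .t := by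
  rw [Tgraph, SimpleGraph.fromRel_adj] at h
  obtain ⟨-, h | h⟩ := h <;> cases y <;> simp_all [TRel]

lemma tlab_some_inr {jt : Fin (3*n^4)} {x : TVert n m S}
    (h : tlab x = some (.inr jt)) : x = .tleaf jt := by
  cases x <;> simp_all [tlab]


/-- With `n ≥ 2`, all `S_i` nonempty subsets of `{1,…,n}`, and `k ≤ m`, every minor
embedding `g` of `P` in `T` satisfies `g(t) = p`. -/
theorem stmt_5 {n m k : ℕ} (hn : 2 ≤ n) (S : Fin m → Finset ℕ)
    (hS : ∀ i, (S i).Nonempty ∧ S i ⊆ Finset.Icc 1 n) (hk : k ≤ m)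
    (g : TVert n m S → PVert n m k)
    (hg : IsMinorEmbedding (Tgraph n m S) (Pgraph n m k) g) :
    g TVert.t = PVert.p := by
  obtain ⟨hsurj, hconn, hedge⟩ := hg
  by_contra hgt
  have hpos : 0 < 3*n^4 := by positivity
  have hadjP : ∀ j : Fin (3*n^4), (Pgraph n m k).Adj PVert.p (PVert.pleaf j) := by
    intro j
    rw [Pgraph, SimpleGraph.fromRel_adj]
    exact ⟨(fun h => by cases h), Or.inl trivial⟩
  choose u v huv hu hv using fun j => hedge (hadjP j)
  have hvinj : Function.Injective v := by
    intro j j' h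
    have h1 := hv j
    rw [h, hv j'] at h1
    injection h1 with h2
    exact h2.symm
  have huA : ∀ j, u j ∈ g ⁻¹' {PVert.p} := fun j => by simp [Set.mem_preimage, hu j]
  have hut : ∀ j, u j ≠ TVert.t := fun j he => hgt (by rw [← he]; exact hu j)
  have ht : TVert.t ∉ g ⁻¹' {PVert.p} := fun hh => hgt hh
  have hn4 : 2^4 ≤ n^4 := Nat.pow_le_pow_left hn 4
  have hlt1 : (1:ℕ) < 3*n^4 := by omega
  obtain ⟨l, hl⟩ : ∃ l, tlab (u ⟨0, hpos⟩) = some l := by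
    cases hc : tlab (u ⟨0, hpos⟩) with
    | none => exact absurd (tlab_eq_none hc) (hut ⟨0, hpos⟩)
    | some l => exact ⟨l, rfl⟩
  have hlabA : ∀ j, tlab (u j) = some l := by
    intro j
    obtain ⟨w⟩ := (hconn PVert.p).preconnected ⟨u j, huA j⟩ ⟨u ⟨0, hpos⟩, huA ⟨0, hpos⟩⟩
    exact (tlab_walk ht w).trans hl
  cases l with
  | inr jt =>
    have hvt : ∀ j, v j = TVert.t := by
      intro j
      have hx := tlab_some_inr (hlabA j)
      exact adj_tleaf (hx ▸ huv j)
    have := hvinj ((hvt ⟨0, hpos⟩).trans (hvt ⟨1, hlt1⟩).symm)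
    simp [Fin.ext_iff] at this
  | inl i =>
    have hvm : ∀ j, v j = TVert.t ∨ tlab (v j) = some (.inl i) := by
      intro j
      by_cases hvtt : v j = TVert.t
      · exact Or.inl hvtt
      · exact Or.inr ((tlab_adj (huv j).symm hvtt (hut j)).trans (hlabA j))
    have einj : Function.Injective (fun j => tenc (v j)) := by
      intro j j' h
      exact hvinj (tenc_inj (fun i => (hS i).2) (hvm j) (hvm j') h)
    have hcard := Fintype.card_le_of_injective _ einj
    simp [Fintype.card_option, Fintype.card_sum, Fintype.card_prod] at hcard
    have a1 : 2 * n^3 ≤ n^4 := by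
      calc 2 * n^3 ≤ n * n^3 := Nat.mul_le_mul hn (le_refl _)
        _ = n^4 := by ring
    have a2 : 2 * n^2 ≤ n^3 := by
      calc 2 * n^2 ≤ n * n^2 := Nat.mul_le_mul hn (le_refl _)
        _ = n^3 := by ring
    have a3 : 2 * n ≤ n^2 := by
      calc 2 * n ≤ n * n := Nat.mul_le_mul hn (le_refl _)
        _ = n^2 := by ring
    have hexp : (n+1)*(n+1) = n^2 + 2*n + 1 := by ring
    rw [hexp] at hcard
    linarith [hcard, a1, a2, a3, hn]
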